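/- Let n ≥ 2 and let e₂, …, e_m ∈ ℝ^{n−1} (2 ≤ m ≤ n) be unit vectors, and for 2 ≤ j ≤ m let Π̃_j^δ ⊆ ℝ^{n−1} be a slab of thickness w_j (i.e. the set of points at distance ≤ w_j/2 from an affine hyperplane with normal e_j). Set R = ⋂_{j=2}^m Π̃_j^δ ∩ [−10,10]^{n−1}. If the vectors e₂,…,e_m are linearly independent, then |R| ≤ C_n · |e₂ ∧ ⋯ ∧ e_m|^{−1} · ∏_{j=2}^m w_j, where |e₂ ∧ ⋯ ∧ e_m| is the square root of the Gram determinant. -/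

import Mathlib

open MeasureTheory EuclideanSpace Metric Set Finset
open scoped RealInnerProductSpace

set_option maxHeartbeats 2000000

/-- For every `n ≥ 2` there is a constant `C > 0` such that for any linearly independent unit
vectors `e 0, …, e (k-1)` in `ℝ^{n-1}` (with `1 ≤ k ≤ n-1`, corresponding to `e₂,…,e_m`,
`k = m-1`) and slabs `Π̃_j` of thickness `w j` with normal `e j`, the set
`R = ⋂_j Π̃_j ∩ [−10,10]^{n−1}` has Lebesgue measure at most
`C |e₂ ∧ ⋯ ∧ e_m|⁻¹ ∏_j w j`, where the wedge norm is the square root of the Gram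
determinant. -/
theorem stmt_8 (n : ℕ) (hn : 2 ≤ n) :
    ∃ C > (0 : ℝ), ∀ (k : ℕ), 1 ≤ k → k ≤ n - 1 →
      ∀ (e : Fin k → EuclideanSpace ℝ (Fin (n - 1))) (w c : Fin k → ℝ),
      (∀ j, ‖e j‖ = 1) → (∀ j, 0 ≤ w j) → LinearIndependent ℝ e →
      volume {x : EuclideanSpace ℝ (Fin (n - 1)) |
          (∀ i, |x i| ≤ 10) ∧ ∀ j, |⟪e j, x⟫ - c j| ≤ w j / 2} ≤
        ENNReal.ofReal
          (C * (Real.sqrt (Matrix.det (Matrix.of fun i j : Fin k => ⟪e i, e j⟫)))⁻¹ *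
            ∏ j, w j) := by
  classical
  set d : ℕ := n - 1 with hd
  have hd1 : 1 ≤ d := by omega
  refine ⟨(20 * n) ^ n, by positivity, ?_⟩
  intro k hk1 hkd e w c hunit hw he
  set U : Submodule ℝ (EuclideanSpace ℝ (Fin d)) := Submodule.span ℝ (Set.range e) with hU
  set K : Submodule ℝ (EuclideanSpace ℝ (Fin d)) := Uᗮ with hK
  have hrkU : Module.finrank ℝ U = k := by
    rw [hU, finrank_span_eq_card he]; simp
  set r : ℕ := Module.finrank ℝ K with hr
  have hkr : k + r = d := by
    have h2 := Submodule.finrank_add_finrank_orthogonal (K := U)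
    rw [hrkU, ← hK, ← hr] at h2
    rw [h2]; simp
  set b : OrthonormalBasis (Fin r) ℝ K := stdOrthonormalBasis ℝ K with hb
  set σ : Fin k ⊕ Fin r ≃ Fin d := finSumFinEquiv.trans (finCongr hkr) with hσ
  set F : Fin k ⊕ Fin r → EuclideanSpace ℝ (Fin d) := Sum.elim e (fun i => (b i : EuclideanSpace ℝ (Fin d))) with hF
  set M : Matrix (Fin d) (Fin d) ℝ := Matrix.of fun i j => F (σ.symm i) j with hM
  set T := Matrix.toEuclideanLin M with hT
  have hinner : ∀ (a : Fin k ⊕ Fin r) (x : EuclideanSpace ℝ (Fin d)),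
      ⟪F a, x⟫ = ∑ j, F a j * x j := by
    intro a x; simp [PiLp.inner_apply, RCLike.inner_apply]
    exact Finset.sum_congr rfl (fun _ _ => mul_comm _ _)
  have hTapp : ∀ (x : EuclideanSpace ℝ (Fin d)) (i : Fin d), T x i = ⟪F (σ.symm i), x⟫ := by
    intro x i; rw [hinner]; rfl
  -- orthogonality facts
  have hbK : ∀ i : Fin r, (b i : EuclideanSpace ℝ (Fin d)) ∈ K := fun i => (b i).2
  have heU : ∀ j : Fin k, e j ∈ U := fun j => Submodule.subset_span (Set.mem_range_self j)
  have horth : ∀ (j : Fin k) (i : Fin r), ⟪e j, (b i : EuclideanSpace ℝ (Fin d))⟫ = 0 := fun j i =>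
    (Submodule.mem_orthogonal U _).1 (hbK i) _ (heU j)
  -- Gram matrix
  set G : Matrix (Fin k ⊕ Fin r) (Fin k ⊕ Fin r) ℝ :=
    Matrix.fromBlocks (Matrix.of fun i j : Fin k => ⟪e i, e j⟫) 0 0 1 with hG
  have hMMT : M * M.transpose = G.submatrix σ.symm σ.symm := by
    ext i i'
    have h3 : (M * M.transpose) i i' = ⟪F (σ.symm i), F (σ.symm i')⟫ := by
      rw [hinner]; rfl
    rw [h3, Matrix.submatrix_apply]
    rcases hai : σ.symm i with j | j <;> rcases hai' : σ.symm i' with j' | j'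
    · rw [hG, Matrix.fromBlocks_apply₁₁]; rfl
    · rw [hG, Matrix.fromBlocks_apply₁₂]
      simpa [hF] using horth j j'
    · rw [hG, Matrix.fromBlocks_apply₂₁]
      have := horth j' j
      rw [real_inner_comm] at this
      simpa [hF] using this
    · rw [hG, Matrix.fromBlocks_apply₂₂]
      have hon := b.orthonormal
      rcases eq_or_ne j j' with h | h
      · subst h
        have : ⟪F (Sum.inr j), F (Sum.inr j)⟫ = ⟪b j, b j⟫ := by
          rw [hF]; simp [Submodule.coe_inner]
          exact Or.inl (hon.1 j)
        rw [this, real_inner_self_eq_norm_sq, hon.1 j]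
        simp [Matrix.one_apply]
      · have : ⟪F (Sum.inr j), F (Sum.inr j')⟫ = ⟪b j, b j'⟫ := by
          rw [hF]; simp [Submodule.coe_inner]
        rw [this, hon.2 h]
        simp [Matrix.one_apply, h]
  have hdet2 : M.det * M.det = (Matrix.of fun i j : Fin k => ⟪e i, e j⟫).det := by
    have h4 : M.det * M.det = (M * M.transpose).det := by
      rw [Matrix.det_mul, Matrix.det_transpose]
    rw [h4, hMMT, Matrix.det_submatrix_equiv_self, hG,
      Matrix.det_fromBlocks_zero₂₁, Matrix.det_one, mul_one]
  -- rows of M are linearly independent, so det M ≠ 0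
  have hFli : LinearIndependent ℝ F := by
    apply LinearIndependent.sum_type he
    · exact b.orthonormal.linearIndependent.map' K.subtype K.ker_subtype
    · apply Disjoint.mono_right _ (Submodule.orthogonal_disjoint U)
      rw [Submodule.span_le]
      rintro x ⟨i, rfl⟩
      exact hbK i
  have hdetM : M.det ≠ 0 := by
    have hrows : LinearIndependent ℝ (fun i : Fin d => M i) := by
      have h5 : (fun i : Fin d => M i) =
          (⇑(WithLp.linearEquiv 2 ℝ (Fin d → ℝ)) ∘ F) ∘ σ.symm := rfl
      rw [h5]
      exact ((hFli.map' (WithLp.linearEquiv 2 ℝ (Fin d → ℝ)).toLinearMap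
        (LinearEquiv.ker _)).comp _ σ.symm.injective)
    have := Matrix.linearIndependent_rows_iff_isUnit.1 hrows
    exact (Matrix.isUnit_iff_isUnit_det M).1 this |>.ne_zero
  have hdetT : LinearMap.det T ≠ 0 := by
    rw [hT, Matrix.toEuclideanLin_eq_toLin, LinearMap.det_toLin]
    exact hdetM
  -- the target box S
  set I : Fin d → Set ℝ := fun i =>
    Sum.elim (fun j : Fin k => Set.Icc (c j - w j / 2) (c j + w j / 2))
      (fun _ : Fin r => Set.Icc (-(10 * (d : ℝ))) (10 * (d : ℝ))) (σ.symm i) with hI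
  set S : Set (EuclideanSpace ℝ (Fin d)) := {y | ∀ i, y i ∈ I i} with hS
  -- the slab region is contained in T ⁻¹' S
  have hsub : {x : EuclideanSpace ℝ (Fin d) |
      (∀ i, |x i| ≤ 10) ∧ ∀ j, |⟪e j, x⟫ - c j| ≤ w j / 2} ⊆ T ⁻¹' S := by
    rintro x ⟨hx1, hx2⟩
    intro i
    have key : ∀ a : Fin k ⊕ Fin r, ⟪F a, x⟫ ∈
        Sum.elim (fun j : Fin k => Set.Icc (c j - w j / 2) (c j + w j / 2))
          (fun _ : Fin r => Set.Icc (-(10 * (d : ℝ))) (10 * (d : ℝ))) a := by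
      rintro (j | j)
      · simp only [Sum.elim_inl, hF, Set.mem_Icc]
        constructor <;> nlinarith [abs_le.1 (hx2 j)]
      · simp only [Sum.elim_inr, Set.mem_Icc, hF]
        have hnx : ‖x‖ ≤ 10 * (d : ℝ) := by
          have h6 : ‖x‖ ≤ Real.sqrt (d * 10 ^ 2) := by
            rw [EuclideanSpace.norm_eq]
            apply Real.sqrt_le_sqrt
            calc ∑ i, ‖x i‖ ^ 2 ≤ ∑ _i : Fin d, (10 : ℝ) ^ 2 := by
                  apply Finset.sum_le_sum
                  intro i _
                  have h := hx1 i
                  rw [Real.norm_eq_abs]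
                  nlinarith [abs_nonneg (x i)]
              _ = (d : ℝ) * 10 ^ 2 := by simp [mul_comm]
          have h7 : Real.sqrt ((d : ℝ) * 10 ^ 2) ≤ 10 * d := by
            rw [show (d : ℝ) * 10 ^ 2 = (10 * Real.sqrt d) ^ 2 by
              rw [mul_pow, Real.sq_sqrt (by positivity)]; ring]
            rw [Real.sqrt_sq (by positivity)]
            have : Real.sqrt (d : ℝ) ≤ d := by
              have := Real.sqrt_le_sqrt (show (d:ℝ) ≤ (d:ℝ)^2 by nlinarith [(Nat.one_le_cast.2 hd1 : (1:ℝ) ≤ (d:ℝ))])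
              rwa [Real.sqrt_sq (by positivity)] at this
            linarith
          linarith
        have habs : |⟪(b j : EuclideanSpace ℝ (Fin d)), x⟫| ≤ ‖x‖ := by
          have h8 := abs_real_inner_le_norm (b j : EuclideanSpace ℝ (Fin d)) x
          have h9 : ‖(b j : EuclideanSpace ℝ (Fin d))‖ = 1 := by
            rw [← Submodule.coe_norm]; exact b.orthonormal.1 j
          rw [h9, one_mul] at h8; exact h8
        exact Set.mem_Icc.2 (abs_le.1 (habs.trans hnx))
    show T x i ∈ I i
    rw [hTapp]
    simp only [hI]
    exact key (σ.symm i)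
  -- volume of S
  have hSvol : volume S = ENNReal.ofReal (∏ j, w j) * ENNReal.ofReal ((20 * (d : ℝ)) ^ r) := by
    have h10 : S = ((MeasurableEquiv.toLp 2 (Fin d → ℝ)).symm) ⁻¹' (Set.univ.pi I) := by
      ext y; simp [hS, Set.mem_pi]
    rw [h10, (EuclideanSpace.volume_preserving_symm_measurableEquiv_toLp (Fin d)).measure_preimage]
    · rw [volume_pi_pi]
      rw [← Equiv.prod_comp σ (fun i => volume (I i))]
      have h11 : ∀ a : Fin k ⊕ Fin r, volume (I (σ a)) =
          Sum.elim (fun j : Fin k => ENNReal.ofReal (w j))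
            (fun _ : Fin r => ENNReal.ofReal (20 * (d : ℝ))) a := by
        intro a
        rcases a with j | j <;>
          simp [hI, Real.volume_Icc] <;> ring_nf
        rw [ENNReal.ofReal_mul (by positivity)]; simp
      simp_rw [h11]
      rw [Fintype.prod_sum_type]
      simp only [Sum.elim_inl, Sum.elim_inr, Finset.prod_const, Finset.card_univ,
        Fintype.card_fin]
      rw [← ENNReal.ofReal_prod_of_nonneg (fun j _ => hw j),
        ← ENNReal.ofReal_pow (by positivity)]
    · apply MeasurableSet.nullMeasurableSet
      apply MeasurableSet.univ_pi
      intro i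
      simp only [hI]
      rcases σ.symm i with j | j <;> exact measurableSet_Icc
  -- putting it together
  have hmain := measure_mono (μ := (volume : Measure (EuclideanSpace ℝ (Fin d)))) hsub
  rw [MeasureTheory.Measure.addHaar_preimage_linearMap volume hdetT S, hSvol] at hmain
  refine hmain.trans ?_
  have hTdet : LinearMap.det T = M.det := by
    rw [hT, Matrix.toEuclideanLin_eq_toLin, LinearMap.det_toLin]
  set g : ℝ := (Matrix.of fun i j : Fin k => ⟪e i, e j⟫).det with hg
  have habsdet : |M.det| = Real.sqrt g := by
    rw [← hdet2, Real.sqrt_mul_self_eq_abs]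
  have hsg : 0 < Real.sqrt g := by
    rw [← habsdet]; exact abs_pos.2 hdetM
  have hprod : 0 ≤ ∏ j, w j := Finset.prod_nonneg (fun j _ => hw j)
  have hpownn : (0:ℝ) ≤ (20 * (d : ℝ)) ^ r := by positivity
  rw [hTdet, abs_inv, habsdet,
    ← ENNReal.ofReal_mul hprod,
    ← ENNReal.ofReal_mul (inv_nonneg.2 hsg.le)]
  apply ENNReal.ofReal_le_ofReal
  have hpow : (20 * (d : ℝ)) ^ r ≤ (20 * (n : ℝ)) ^ n := by
    have hd_le : (d : ℝ) ≤ n := by exact_mod_cast Nat.sub_le n 1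
    have h1 : (1 : ℝ) ≤ 20 * (d : ℝ) := by
      have : (1:ℝ) ≤ (d:ℝ) := Nat.one_le_cast.2 hd1
      linarith
    calc (20 * (d : ℝ)) ^ r ≤ (20 * (n : ℝ)) ^ r := by
          apply pow_le_pow_left₀ (by linarith) (by linarith)
      _ ≤ (20 * (n : ℝ)) ^ n := by
          apply pow_le_pow_right₀ (by linarith)
          omega
  calc (Real.sqrt g)⁻¹ * ((∏ j, w j) * (20 * (d : ℝ)) ^ r)
      ≤ (Real.sqrt g)⁻¹ * ((∏ j, w j) * (20 * (n : ℝ)) ^ n) := by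
        apply mul_le_mul_of_nonneg_left _ (inv_nonneg.2 hsg.le)
        exact mul_le_mul_of_nonneg_left hpow hprod
    _ = (20 * (n : ℝ)) ^ n * (Real.sqrt g)⁻¹ * (∏ j, w j) := by ring
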